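/- Let f, g ∈ K[x] with n = deg f > deg g, and let {(a_1, b_1), (a_2, b_2)} be a basis of the K[x]-module Y = {(a, b) : f ∣ a − b·g} such that max{deg a_1, deg b_1} + max{deg a_2, deg b_2} = n. Then for every (a, b) ∈ Y, writing (a, b) = p·(a_1, b_1) + q·(a_2, b_2) with p, q ∈ K[x], one has deg p ≤ δ − μ_1 and deg q ≤ δ − μ_2, where δ = max{deg a, deg b}, μ_1 = max{deg a_1, deg b_1}, μ_2 = max{deg a_2, deg b_2}. -/

import Mathlib

open Polynomial

private lemma mainAux {K : Type*} [Field K] (a1 b1 a2 b2 p q a b : Polynomial K) (μ1 μ2 : ℕ)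
    (h11 : a1.natDegree ≤ μ1) (h12 : b1.natDegree ≤ μ1)
    (h21 : a2.natDegree ≤ μ2) (h22 : b2.natDegree ≤ μ2)
    (hlc : a1.coeff μ1 * b2.coeff μ2 - a2.coeff μ2 * b1.coeff μ1 ≠ 0)
    (ha : a = p * a1 + q * a2) (hb : b = p * b1 + q * b2) :
    p.degree + (μ1 : WithBot ℕ) ≤ (max a.natDegree b.natDegree : WithBot ℕ) := by
  rcases eq_or_ne p 0 with rfl | hp
  · simp
  suffices hsuf : p.natDegree + μ1 ≤ max a.natDegree b.natDegree by
    rw [degree_eq_natDegree hp]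
    simp only [Nat.cast_withBot, ← WithBot.coe_add, ← WithBot.coe_max, WithBot.coe_le_coe]
    simpa using hsuf
  set dp := p.natDegree with hdp
  have hp0 : p.coeff dp ≠ 0 := by
    rw [hdp, coeff_natDegree]; exact leadingCoeff_ne_zero.mpr hp
  have key : ∀ d : ℕ, dp + μ1 ≤ d → (a.coeff d ≠ 0 ∨ b.coeff d ≠ 0) →
      dp + μ1 ≤ max a.natDegree b.natDegree := by
    intro d hd h
    rcases h with h | h
    · exact hd.trans ((le_natDegree_of_ne_zero h).trans (le_max_left _ _))
    · exact hd.trans ((le_natDegree_of_ne_zero h).trans (le_max_right _ _))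
  rcases eq_or_ne q 0 with rfl | hq
  · have hv1 : a1.coeff μ1 ≠ 0 ∨ b1.coeff μ1 ≠ 0 := by
      by_contra h
      push_neg at h
      exact hlc (by rw [h.1, h.2]; ring)
    have hca : a.coeff (dp + μ1) = p.coeff dp * a1.coeff μ1 := by
      rw [ha, coeff_add, coeff_mul_add_eq_of_natDegree_le le_rfl h11, zero_mul, coeff_zero, add_zero]
    have hcb : b.coeff (dp + μ1) = p.coeff dp * b1.coeff μ1 := by
      rw [hb, coeff_add, coeff_mul_add_eq_of_natDegree_le le_rfl h12, zero_mul, coeff_zero, add_zero]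
    rcases hv1 with hv | hv
    · exact key _ le_rfl (Or.inl (by rw [hca]; exact mul_ne_zero hp0 hv))
    · exact key _ le_rfl (Or.inr (by rw [hcb]; exact mul_ne_zero hp0 hv))
  set dq := q.natDegree with hdq
  have hq0 : q.coeff dq ≠ 0 := by
    rw [hdq, coeff_natDegree]; exact leadingCoeff_ne_zero.mpr hq
  rcases lt_trichotomy (dq + μ2) (dp + μ1) with hc | hc | hc
  · have hz2 : ∀ r : Polynomial K, r.natDegree ≤ μ2 → (q * r).coeff (dp + μ1) = 0 := by
      intro r hr
      exact coeff_eq_zero_of_natDegree_lt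
        (lt_of_le_of_lt (natDegree_mul_le.trans (add_le_add le_rfl hr)) hc)
    have hv1 : a1.coeff μ1 ≠ 0 ∨ b1.coeff μ1 ≠ 0 := by
      by_contra h
      push_neg at h
      exact hlc (by rw [h.1, h.2]; ring)
    have hca : a.coeff (dp + μ1) = p.coeff dp * a1.coeff μ1 := by
      rw [ha, coeff_add, coeff_mul_add_eq_of_natDegree_le le_rfl h11, hz2 _ h21, add_zero]
    have hcb : b.coeff (dp + μ1) = p.coeff dp * b1.coeff μ1 := by
      rw [hb, coeff_add, coeff_mul_add_eq_of_natDegree_le le_rfl h12, hz2 _ h22, add_zero]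
    rcases hv1 with hv | hv
    · exact key _ le_rfl (Or.inl (by rw [hca]; exact mul_ne_zero hp0 hv))
    · exact key _ le_rfl (Or.inr (by rw [hcb]; exact mul_ne_zero hp0 hv))
  · -- equal degrees
    have hca : a.coeff (dp + μ1) = p.coeff dp * a1.coeff μ1 + q.coeff dq * a2.coeff μ2 := by
      rw [ha, coeff_add, coeff_mul_add_eq_of_natDegree_le le_rfl h11]
      congr 1
      rw [← hc, coeff_mul_add_eq_of_natDegree_le le_rfl h21]
    have hcb : b.coeff (dp + μ1) = p.coeff dp * b1.coeff μ1 + q.coeff dq * b2.coeff μ2 := by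
      rw [hb, coeff_add, coeff_mul_add_eq_of_natDegree_le le_rfl h12]
      congr 1
      rw [← hc, coeff_mul_add_eq_of_natDegree_le le_rfl h22]
    apply key _ le_rfl
    by_contra h
    push_neg at h
    have e1 : p.coeff dp * a1.coeff μ1 + q.coeff dq * a2.coeff μ2 = 0 := by
      rw [← hca]; exact h.1
    have e2 : p.coeff dp * b1.coeff μ1 + q.coeff dq * b2.coeff μ2 = 0 := by
      rw [← hcb]; exact h.2
    have hz : p.coeff dp * (a1.coeff μ1 * b2.coeff μ2 - a2.coeff μ2 * b1.coeff μ1) = 0 := by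
      linear_combination b2.coeff μ2 * e1 - a2.coeff μ2 * e2
    rcases mul_eq_zero.mp hz with h' | h'
    · exact hp0 h'
    · exact hlc h'
  · -- dq + μ2 > dp + μ1
    have hz1 : ∀ r : Polynomial K, r.natDegree ≤ μ1 → (p * r).coeff (dq + μ2) = 0 := by
      intro r hr
      exact coeff_eq_zero_of_natDegree_lt
        (lt_of_le_of_lt (natDegree_mul_le.trans (add_le_add le_rfl hr)) hc)
    have hv2 : a2.coeff μ2 ≠ 0 ∨ b2.coeff μ2 ≠ 0 := by
      by_contra h
      push_neg at h
      exact hlc (by rw [h.1, h.2]; ring)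
    have hca : a.coeff (dq + μ2) = q.coeff dq * a2.coeff μ2 := by
      rw [ha, coeff_add, coeff_mul_add_eq_of_natDegree_le le_rfl h21, hz1 _ h11, zero_add]
    have hcb : b.coeff (dq + μ2) = q.coeff dq * b2.coeff μ2 := by
      rw [hb, coeff_add, coeff_mul_add_eq_of_natDegree_le le_rfl h22, hz1 _ h12, zero_add]
    rcases hv2 with hv | hv
    · exact key _ hc.le (Or.inl (by rw [hca]; exact mul_ne_zero hq0 hv))
    · exact key _ hc.le (Or.inr (by rw [hcb]; exact mul_ne_zero hq0 hv))

theorem statement10 {K : Type*} [Field K] (f g a1 b1 a2 b2 : Polynomial K)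
    (hfg : g.degree < f.degree)
    (hbasis : ∀ a b : Polynomial K, f ∣ a - b * g ↔
      ∃! pq : Polynomial K × Polynomial K,
        (a, b) = (pq.1 * a1 + pq.2 * a2, pq.1 * b1 + pq.2 * b2))
    (hsum : max a1.natDegree b1.natDegree + max a2.natDegree b2.natDegree
      = f.natDegree) :
    ∀ a b p q : Polynomial K, f ∣ a - b * g →
      a = p * a1 + q * a2 → b = p * b1 + q * b2 →
      p.degree + (max a1.natDegree b1.natDegree : WithBot ℕ)
          ≤ (max a.natDegree b.natDegree : WithBot ℕ) ∧
      q.degree + (max a2.natDegree b2.natDegree : WithBot ℕ)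
          ≤ (max a.natDegree b.natDegree : WithBot ℕ) := by
  have hf0 : f ≠ 0 := ne_zero_of_degree_gt hfg
  set μ1 := max a1.natDegree b1.natDegree with hμ1
  set μ2 := max a2.natDegree b2.natDegree with hμ2
  -- independence
  obtain ⟨pq0, hpq0, huniq0⟩ := (hbasis 0 0).mp (by simp)
  have hpq00 : pq0 = (0, 0) := (huniq0 (0, 0) (by simp)).symm
  have hindep : ∀ P Q : Polynomial K, P * a1 + Q * a2 = 0 → P * b1 + Q * b2 = 0 →
      P = 0 ∧ Q = 0 := by
    intro P Q h1 h2
    have := huniq0 (P, Q) (Prod.ext_iff.mpr ⟨h1.symm, h2.symm⟩)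
    rw [hpq00] at this
    exact ⟨congrArg Prod.fst this, congrArg Prod.snd this⟩
  -- representations of (f,0) and (g,1)
  obtain ⟨⟨p1, q1⟩, hfe, _⟩ := (hbasis f 0).mp (by simp)
  obtain ⟨⟨p2, q2⟩, hge, _⟩ := (hbasis g 1).mp (by simp)
  simp only [Prod.mk.injEq] at hfe hge
  obtain ⟨hf1, hf2⟩ := hfe
  obtain ⟨hg1, hg2⟩ := hge
  -- membership of (a1,b1) and (a2,b2)
  have hdvd1 : f ∣ a1 - b1 * g := by
    apply (hbasis a1 b1).mpr
    refine ⟨(1, 0), by simp, ?_⟩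
    rintro ⟨P, Q⟩ hy
    rw [Prod.mk.injEq] at hy
    obtain ⟨hy1, hy2⟩ := hy
    have := hindep (P - 1) Q (by linear_combination -hy1) (by linear_combination -hy2)
    rw [Prod.mk.injEq]
    exact ⟨by have := this.1; rwa [sub_eq_zero] at this, this.2⟩
  have hdvd2 : f ∣ a2 - b2 * g := by
    apply (hbasis a2 b2).mpr
    refine ⟨(0, 1), by simp, ?_⟩
    rintro ⟨P, Q⟩ hy
    rw [Prod.mk.injEq] at hy
    obtain ⟨hy1, hy2⟩ := hy
    have := hindep P (Q - 1) (by linear_combination -hy1) (by linear_combination -hy2)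
    rw [Prod.mk.injEq]
    exact ⟨this.1, by have := this.2; rwa [sub_eq_zero] at this⟩
  obtain ⟨h1, hh1⟩ := hdvd1
  obtain ⟨h2, hh2⟩ := hdvd2
  have ha1 : a1 = f * h1 + b1 * g := by linear_combination hh1
  have ha2 : a2 = f * h2 + b2 * g := by linear_combination hh2
  -- four identity equations
  have hX1 := hindep (h1 * p1 + b1 * p2 - 1) (h1 * q1 + b1 * q2)
    (by linear_combination (-h1) * hf1 + (-b1) * hg1 - ha1)
    (by linear_combination (-h1) * hf2 + (-b1) * hg2)
  have hX2 := hindep (h2 * p1 + b2 * p2) (h2 * q1 + b2 * q2 - 1)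
    (by linear_combination (-h2) * hf1 + (-b2) * hg1 - ha2)
    (by linear_combination (-h2) * hf2 + (-b2) * hg2)
  have e1 : h1 * p1 + b1 * p2 = 1 := by linear_combination hX1.1
  have e2 : h1 * q1 + b1 * q2 = 0 := hX1.2
  have e3 : h2 * p1 + b2 * p2 = 0 := hX2.1
  have e4 : h2 * q1 + b2 * q2 = 1 := by linear_combination hX2.2
  -- determinant
  set w := p1 * q2 - p2 * q1 with hw
  set D := a1 * b2 - a2 * b1 with hDdef
  have hfD : f = w * D := by
    have step : f = (p1 * a1 + q1 * a2) * (p2 * b1 + q2 * b2)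
        - (p1 * b1 + q1 * b2) * (p2 * a1 + q2 * a2) := by
      rw [← hf1, ← hf2, ← hg1, ← hg2]; ring
    rw [step]; ring
  have hunit : w * (h1 * b2 - b1 * h2) = 1 := by
    have step : (1 : Polynomial K) = (h1 * p1 + b1 * p2) * (h2 * q1 + b2 * q2)
        - (h1 * q1 + b1 * q2) * (h2 * p1 + b2 * p2) := by
      rw [e1, e2, e3, e4]; ring
    linear_combination -step
  have hwne : w ≠ 0 := left_ne_zero_of_mul (hunit ▸ one_ne_zero)
  have hvne : (h1 * b2 - b1 * h2) ≠ 0 := right_ne_zero_of_mul (hunit ▸ one_ne_zero)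
  have hDne : D ≠ 0 := right_ne_zero_of_mul (hfD ▸ hf0)
  have hwdeg : w.natDegree = 0 := by
    have := natDegree_mul hwne hvne
    rw [hunit] at this
    simp at this
    omega
  have hDdeg : D.natDegree = μ1 + μ2 := by
    have := natDegree_mul hwne hDne
    rw [← hfD, hwdeg] at this
    omega
  have hlcD : D.coeff (μ1 + μ2) ≠ 0 := by
    rw [← hDdeg, coeff_natDegree]
    exact leadingCoeff_ne_zero.mpr hDne
  have hlc : a1.coeff μ1 * b2.coeff μ2 - a2.coeff μ2 * b1.coeff μ1 ≠ 0 := by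
    intro h
    apply hlcD
    rw [hDdef, coeff_sub, coeff_mul_add_eq_of_natDegree_le (le_max_left _ _) (le_max_right _ _)]
    have : (a2 * b1).coeff (μ1 + μ2) = a2.coeff μ2 * b1.coeff μ1 := by
      rw [add_comm μ1 μ2]
      exact coeff_mul_add_eq_of_natDegree_le (le_max_left _ _) (le_max_right _ _)
    rw [this]
    exact h
  intro a b p q _ ha hb
  constructor
  · exact mainAux a1 b1 a2 b2 p q a b μ1 μ2 (le_max_left _ _) (le_max_right _ _)
      (le_max_left _ _) (le_max_right _ _) hlc ha hb
  · refine mainAux a2 b2 a1 b1 q p a b μ2 μ1 (le_max_left _ _) (le_max_right _ _)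
      (le_max_left _ _) (le_max_right _ _) ?_ (by rw [ha]; ring) (by rw [hb]; ring)
    intro h
    exact hlc (by linear_combination -h)
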